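/- For a fixed citation vector x₁ ≥ x₂ ≥ ... ≥ x_m, the index ν_α is a monotone non-decreasing function of the real parameter α ≥ 0; that is, if 0 ≤ α ≤ β then ν_α ≤ ν_β. -/
import Mathlib


open Finset

/-- Partial sum `S_k = x₁ + ⋯ + x_k` of a citation vector, with the natural
extension `S_k = S_m` for `k > m`. -/
def pSum {m : ℕ} (x : Fin m → ℕ) (k : ℕ) : ℕ :=
  ∑ i : Fin m, if (i : ℕ) < k then x i else 0

/-- `m*(j)`: the number of papers with at least `j` citations. -/
def mStar {m : ℕ} (x : Fin m → ℕ) (j : ℕ) : ℕ :=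
  (Finset.univ.filter fun i => j ≤ x i).card

/-- The Hirsch `h`-index: `h = max {j ≥ 1 : m*(j) ≥ j}` (max ∅ = 0). -/
noncomputable def hIndex {m : ℕ} (x : Fin m → ℕ) : ℕ :=
  sSup {j : ℕ | 1 ≤ j ∧ j ≤ mStar x j}

/-- The Egghe `g`-index: `g = max {1 ≤ k ≤ m : S_k ≥ k²}` (max ∅ = 0). -/
noncomputable def gIndex {m : ℕ} (x : Fin m → ℕ) : ℕ :=
  sSup {k : ℕ | 1 ≤ k ∧ k ≤ m ∧ k ^ 2 ≤ pSum x k}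

/-- The unconstrained `g*`-index: `g* = max {k ≥ 1 : S_k ≥ k²}` (max ∅ = 0). -/
noncomputable def gStar {m : ℕ} (x : Fin m → ℕ) : ℕ :=
  sSup {k : ℕ | 1 ≤ k ∧ k ^ 2 ≤ pSum x k}

/-- The `ν`-index: `ν = max {j ≥ 1 : Σ_{i : x_i ≥ j} x_i ≥ j²}` (max ∅ = 0). -/
noncomputable def nuIndex {m : ℕ} (x : Fin m → ℕ) : ℕ :=
  sSup {j : ℕ | 1 ≤ j ∧ j ^ 2 ≤ ∑ i ∈ Finset.univ.filter (fun i => j ≤ x i), x i}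

/-- The tempered `ν̄`-index: `ν̄ = max {1 ≤ j ≤ m : Σ_{i : x_i ≥ j} x_i ≥ j²}` (max ∅ = 0). -/
noncomputable def nuBar {m : ℕ} (x : Fin m → ℕ) : ℕ :=
  sSup {j : ℕ | 1 ≤ j ∧ j ≤ m ∧ j ^ 2 ≤ ∑ i ∈ Finset.univ.filter (fun i => j ≤ x i), x i}

/-- The parametric index `ν_α = max {j ≥ 1 : Σ_{i : x_i ≥ j} x_i^α ≥ j^(α+1)}` (max ∅ = 0),
with real powers. -/
noncomputable def nuAlpha {m : ℕ} (x : Fin m → ℕ) (α : ℝ) : ℕ :=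
  sSup {j : ℕ | 1 ≤ j ∧
    (j : ℝ) ^ (α + 1) ≤ ∑ i ∈ Finset.univ.filter (fun i => j ≤ x i), (x i : ℝ) ^ α}

/-- Extension of a finite citation vector by fictitious zeros. -/
def extByZero {m : ℕ} (x : Fin m → ℕ) (i : ℕ) : ℕ :=
  if h : i < m then x ⟨i, h⟩ else 0

theorem stmt13 {m : ℕ} (hm : 1 ≤ m) (x : Fin m → ℕ) (hx : Antitone x)
    (α β : ℝ) (hα : 0 ≤ α) (hαβ : α ≤ β) :
    nuAlpha x α ≤ nuAlpha x β := by
  have hsub : {j : ℕ | 1 ≤ j ∧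
      (j : ℝ) ^ (α + 1) ≤ ∑ i ∈ Finset.univ.filter (fun i => j ≤ x i), (x i : ℝ) ^ α} ⊆
      {j : ℕ | 1 ≤ j ∧
      (j : ℝ) ^ (β + 1) ≤ ∑ i ∈ Finset.univ.filter (fun i => j ≤ x i), (x i : ℝ) ^ β} := by
    rintro j ⟨hj1, hj2⟩
    refine ⟨hj1, ?_⟩
    have hjpos : (0:ℝ) < (j:ℝ) := by exact_mod_cast hj1
    have key : ∀ i ∈ Finset.univ.filter (fun i => j ≤ x i),
        (j:ℝ) ^ (β - α) * (x i : ℝ) ^ α ≤ (x i : ℝ) ^ β := by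
      intro i hi
      have hji : (j:ℝ) ≤ (x i : ℝ) := by
        exact_mod_cast (Finset.mem_filter.mp hi).2
      have hxpos : (0:ℝ) < (x i : ℝ) := lt_of_lt_of_le hjpos hji
      have h1 : (j:ℝ) ^ (β - α) ≤ (x i : ℝ) ^ (β - α) :=
        Real.rpow_le_rpow hjpos.le hji (by linarith)
      calc (j:ℝ) ^ (β - α) * (x i : ℝ) ^ α
          ≤ (x i : ℝ) ^ (β - α) * (x i : ℝ) ^ α := by
            apply mul_le_mul_of_nonneg_right h1 (Real.rpow_nonneg hxpos.le α)
        _ = (x i : ℝ) ^ β := by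
            rw [← Real.rpow_add hxpos]; ring_nf
    calc (j:ℝ) ^ (β + 1) = (j:ℝ) ^ (β - α) * (j:ℝ) ^ (α + 1) := by
          rw [← Real.rpow_add hjpos]; ring_nf
      _ ≤ (j:ℝ) ^ (β - α) * ∑ i ∈ Finset.univ.filter (fun i => j ≤ x i), (x i : ℝ) ^ α := by
          apply mul_le_mul_of_nonneg_left hj2 (Real.rpow_nonneg hjpos.le _)
      _ = ∑ i ∈ Finset.univ.filter (fun i => j ≤ x i), (j:ℝ) ^ (β - α) * (x i : ℝ) ^ α := by
          rw [Finset.mul_sum]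
      _ ≤ ∑ i ∈ Finset.univ.filter (fun i => j ≤ x i), (x i : ℝ) ^ β :=
          Finset.sum_le_sum key
  have hbdd : BddAbove {j : ℕ | 1 ≤ j ∧
      (j : ℝ) ^ (β + 1) ≤ ∑ i ∈ Finset.univ.filter (fun i => j ≤ x i), (x i : ℝ) ^ β} := by
    refine ⟨Nat.ceil (∑ i : Fin m, (x i : ℝ) ^ β), ?_⟩
    rintro j ⟨hj1, hj2⟩
    have hjpos : (0:ℝ) < (j:ℝ) := by exact_mod_cast hj1
    have h1 : (j:ℝ) ≤ (j:ℝ) ^ (β + 1) := by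
      have : (j:ℝ) ^ (1:ℝ) ≤ (j:ℝ) ^ (β + 1) :=
        Real.rpow_le_rpow_of_exponent_le (by exact_mod_cast hj1) (by linarith)
      simpa using this
    have h2 : ∑ i ∈ Finset.univ.filter (fun i => j ≤ x i), (x i : ℝ) ^ β ≤
        ∑ i : Fin m, (x i : ℝ) ^ β := by
      apply Finset.sum_le_sum_of_subset_of_nonneg (Finset.filter_subset _ _)
      intro i _ _
      exact Real.rpow_nonneg (Nat.cast_nonneg _) β
    have : (j:ℝ) ≤ ∑ i : Fin m, (x i : ℝ) ^ β := le_trans h1 (le_trans hj2 h2)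
    exact_mod_cast le_trans this (Nat.le_ceil _)
  exact csSup_le_csSup' hbdd hsub
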